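/- arXiv:1011.1564 — 4 statements merged into one kernel-verified Lean document; each statement's English description precedes it below -/
import Mathlib

section
/- For multisets (or multi-indices) m1, m2, n1, n2 of variables, define the 2x2 catalecticant bracket [m1,m2|n1,n2] to be the determinant of the 2x2 matrix whose (i,j) entry is the variable z indexed by the multiset union of m_i and n_j. Then for any multisets u1, u2, v1, v2, a1, a2, b1, b2, the identity [u1∪u2, v1∪v2 | a1∪a2, b1∪b2] = [u1∪a1, v1∪b1 | u2∪a2, v2∪b2] + [u1∪b2, v1∪a2 | v2∪a1, u2∪b1] holds in the polynomial ring whose variables z_γ are indexed by multisets γ. -/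
open MvPolynomial

/-- The 2×2 catalecticant bracket: `[m1,m2|n1,n2] = z_{m1∪n1}·z_{m2∪n2} − z_{m1∪n2}·z_{m2∪n1}`,
in the polynomial ring whose variables are indexed by multisets (multiset union = addition). -/
noncomputable def catBracket {K : Type*} [CommRing K] {τ : Type*}
    (m1 m2 n1 n2 : Multiset τ) : MvPolynomial (Multiset τ) K :=
  X (m1 + n1) * X (m2 + n2) - X (m1 + n2) * X (m2 + n1)

theorem stmt0 {K : Type*} [CommRing K] {τ : Type*}
    (u1 u2 v1 v2 a1 a2 b1 b2 : Multiset τ) :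
    (catBracket (K := K) (u1 + u2) (v1 + v2) (a1 + a2) (b1 + b2)) =
      catBracket (u1 + a1) (v1 + b1) (u2 + a2) (v2 + b2) +
      catBracket (u1 + b2) (v1 + a2) (v2 + a1) (u2 + b1) := by
  simp only [catBracket]
  have h : ∀ x y z w : Multiset τ, x + y + (z + w) = x + z + (y + w) := by intros; abel
  rw [h u1 u2 a1 a2, h v1 v2 b1 b2, h u1 u2 b1 b2, h v1 v2 a1 a2]
  ring_nf
  congr 1 <;> congr 1 <;> abel
end

section
/- Over a field K, let H(d) denote the (d+1)-variable generic Hankel matrix setup: for 1 ≤ t ≤ d−1, Cat(t, d−t; 2) is the (t+1) × (d−t+1) matrix with (i,j) entry z_{i+j} for 0 ≤ i ≤ t, 0 ≤ j ≤ d−t, in the polynomial ring K[z_0, …, z_d]. Prove that the ideal generated by the 2×2 minors of Cat(1, d−1; 2) equals the ideal generated by the 2×2 minors of Cat(t, d−t; 2) for every 1 ≤ t ≤ d−1. -/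
open MvPolynomial
open Fin.NatCast

/-- The ideal generated by the 2×2 minors of the Hankel/catalecticant matrix `Cat(t, d−t; 2)`,
the `(t+1) × (d−t+1)` matrix with `(i,j)` entry `z_{i+j}`, inside `K[z_0, …, z_d]`. -/
noncomputable def hankelMinors2 (K : Type*) [Field K] (d t : ℕ) :
    Ideal (MvPolynomial (Fin (d + 1)) K) :=
  Ideal.span {p | ∃ i i' j j' : ℕ, i < i' ∧ i' ≤ t ∧ j < j' ∧ j' ≤ d - t ∧
    p = X ((i + j : ℕ) : Fin (d + 1)) * X ((i' + j' : ℕ) : Fin (d + 1)) -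
        X ((i + j' : ℕ) : Fin (d + 1)) * X ((i' + j : ℕ) : Fin (d + 1))}

namespace HankelAux

variable {K : Type*} [Field K]

/-- A single minor relates `(a, b)` to `(a+u, b-u)` under suitable conditions. -/
lemma minor (d t : ℕ) (hd : 2 ≤ d) (ht1 : 1 ≤ t) (ht2 : t ≤ d - 1)
    (a b u : ℕ) (h1 : 1 ≤ u) (h2 : a + u + 1 ≤ b) (h3 : b ≤ a + t + u)
    (h4 : u ≤ d - t) (h5 : b ≤ d) :
    (X ((a : ℕ) : Fin (d + 1)) * X ((b : ℕ) : Fin (d + 1)) -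
      X ((a + u : ℕ) : Fin (d + 1)) * X ((b - u : ℕ) : Fin (d + 1)) :
      MvPolynomial (Fin (d+1)) K) ∈ hankelMinors2 K d t := by
  apply Ideal.subset_span
  refine ⟨(a + u) - (d - t), (a + u) - (d - t) + (b - a - u),
    a - ((a + u) - (d - t)), a - ((a + u) - (d - t)) + u,
    by omega, by omega, by omega, by omega, ?_⟩
  have e1 : (a + u) - (d - t) + (a - ((a + u) - (d - t))) = a := by omega
  have e2 : (a + u) - (d - t) + (b - a - u) + (a - ((a + u) - (d - t)) + u) = b := by omega
  have e3 : (a + u) - (d - t) + (a - ((a + u) - (d - t)) + u) = a + u := by omega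
  have e4 : (a + u) - (d - t) + (b - a - u) + (a - ((a + u) - (d - t))) = b - u := by omega
  rw [e1, e2, e3, e4]

lemma key0 (d t : ℕ) (hd : 2 ≤ d) (ht1 : 1 ≤ t) (ht2 : t ≤ d - 1) :
    ∀ n a b c e : ℕ, b - a ≤ n → a + b = c + e → a ≤ c → a ≤ e → c ≤ e → b ≤ d →
    (X ((a : ℕ) : Fin (d + 1)) * X ((b : ℕ) : Fin (d + 1)) -
      X ((c : ℕ) : Fin (d + 1)) * X ((e : ℕ) : Fin (d + 1)) : MvPolynomial (Fin (d+1)) K)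
      ∈ hankelMinors2 K d t := by
  intro n
  induction n with
  | zero =>
    intro a b c e hn hs hac hae hce hb
    have h : c = a ∧ e = b := by omega
    rw [h.1, h.2]
    simp
  | succ n ih =>
    intro a b c e hn hs hac hae hce hb
    rcases eq_or_lt_of_le hac with h | h
    · have h2 : e = b := by omega
      rw [← h, h2]; simp
    · -- a < c ≤ e, so a + 2 ≤ b
      have hb2 : a + 2 ≤ b := by omega
      -- facts about M := max t (d - t)
      set M := max t (d - t) with hM
      have hMt : t ≤ M := le_max_left _ _
      have hMd : d - t ≤ M := le_max_right _ _
      have hMor : M = t ∨ M = d - t := max_choice _ _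
      -- step size s
      set s := max 1 (b - a - M) with hsdef
      have hs1 : 1 ≤ s := le_max_left _ _
      have hs2 : b - a - M ≤ s := le_max_right _ _
      have hs3 : s = 1 ∨ s = b - a - M := max_choice _ _
      have hs4 : 2 * s ≤ b - a := by omega
      -- the single-minor step from (a, b) to (a+s, b-s)
      have hstep : (X ((a : ℕ) : Fin (d + 1)) * X ((b : ℕ) : Fin (d + 1)) -
          X ((a + s : ℕ) : Fin (d + 1)) * X ((b - s : ℕ) : Fin (d + 1)) :
          MvPolynomial (Fin (d+1)) K) ∈ hankelMinors2 K d t := by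
        by_cases hcase : b - a - s ≤ d - t ∧ b ≤ a + t + (b - a - s)
        · have hm := minor (K := K) d t hd ht1 ht2 a b (b - a - s)
            (by omega) (by omega) (by omega) (by omega) hb
          rw [show a + (b - a - s) = b - s by omega, show b - (b - a - s) = a + s by omega,
            mul_comm (X ((b - s : ℕ) : Fin (d + 1)))] at hm
          exact hm
        · have hm := minor (K := K) d t hd ht1 ht2 a b s
            (by omega) (by omega) (by omega) (by omega) hb
          rwa [show b - s = b - s from rfl] at hm
      rcases le_or_gt s (c - a) with hsv | hsv
      · -- no overshoot: recurse with inner pair (a+s, b-s) against (c, e)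
        have rest := ih (a + s) (b - s) c e (by omega) (by omega) (by omega) (by omega)
          hce (by omega)
        have heq : (X ((a : ℕ) : Fin (d + 1)) * X ((b : ℕ) : Fin (d + 1)) -
            X ((c : ℕ) : Fin (d + 1)) * X ((e : ℕ) : Fin (d + 1)) :
            MvPolynomial (Fin (d+1)) K)
            = (X ((a : ℕ) : Fin (d + 1)) * X ((b : ℕ) : Fin (d + 1)) -
               X ((a + s : ℕ) : Fin (d + 1)) * X ((b - s : ℕ) : Fin (d + 1)))
            + (X ((a + s : ℕ) : Fin (d + 1)) * X ((b - s : ℕ) : Fin (d + 1)) -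
               X ((c : ℕ) : Fin (d + 1)) * X ((e : ℕ) : Fin (d + 1))) := by ring
        rw [heq]
        exact Ideal.add_mem _ hstep rest
      · -- overshoot: recurse with outer pair (c, e) against (a+s, b-s)
        have hvM : c - a ≤ M := by omega
        have rest := ih c e (a + s) (b - s) (by omega) (by omega) (by omega) (by omega)
          (by omega) (by omega)
        have heq : (X ((a : ℕ) : Fin (d + 1)) * X ((b : ℕ) : Fin (d + 1)) -
            X ((c : ℕ) : Fin (d + 1)) * X ((e : ℕ) : Fin (d + 1)) :
            MvPolynomial (Fin (d+1)) K)
            = (X ((a : ℕ) : Fin (d + 1)) * X ((b : ℕ) : Fin (d + 1)) -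
               X ((a + s : ℕ) : Fin (d + 1)) * X ((b - s : ℕ) : Fin (d + 1)))
            - (X ((c : ℕ) : Fin (d + 1)) * X ((e : ℕ) : Fin (d + 1)) -
               X ((a + s : ℕ) : Fin (d + 1)) * X ((b - s : ℕ) : Fin (d + 1))) := by ring
        rw [heq]
        exact Ideal.sub_mem _ hstep rest

lemma key (d t : ℕ) (hd : 2 ≤ d) (ht1 : 1 ≤ t) (ht2 : t ≤ d - 1)
    (a b c e : ℕ) (hs : a + b = c + e) (hac : a ≤ c) (hae : a ≤ e) (hb : b ≤ d) :
    (X ((a : ℕ) : Fin (d + 1)) * X ((b : ℕ) : Fin (d + 1)) -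
      X ((c : ℕ) : Fin (d + 1)) * X ((e : ℕ) : Fin (d + 1)) : MvPolynomial (Fin (d+1)) K)
      ∈ hankelMinors2 K d t := by
  rcases le_total c e with h | h
  · exact key0 d t hd ht1 ht2 (b - a) a b c e le_rfl hs hac hae h hb
  · have := key0 (K := K) d t hd ht1 ht2 (b - a) a b e c le_rfl (by omega) hae hac h hb
    rwa [mul_comm (X ((e : ℕ) : Fin (d + 1)))] at this

lemma gen (d t : ℕ) (hd : 2 ≤ d) (ht1 : 1 ≤ t) (ht2 : t ≤ d - 1)
    (a b c e : ℕ) (hs : a + b = c + e) (ha : a ≤ d) (hb : b ≤ d) (hc : c ≤ d) (he : e ≤ d) :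
    (X ((a : ℕ) : Fin (d + 1)) * X ((b : ℕ) : Fin (d + 1)) -
      X ((c : ℕ) : Fin (d + 1)) * X ((e : ℕ) : Fin (d + 1)) : MvPolynomial (Fin (d+1)) K)
      ∈ hankelMinors2 K d t := by
  rcases le_total a b with h1 | h1 <;> rcases le_total c e with h2 | h2 <;>
    rcases le_total a c with h3 | h3 <;> rcases le_total a e with h4 | h4 <;>
    rcases le_total b c with h5 | h5 <;> rcases le_total b e with h6 | h6
  all_goals first
  | exact key d t hd ht1 ht2 a b c e hs (by omega) (by omega) hb
  | { have := key (K := K) d t hd ht1 ht2 b a c e (by omega) (by omega) (by omega) ha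
      rwa [mul_comm (X ((b : ℕ) : Fin (d + 1)))] at this }
  | { have := key (K := K) d t hd ht1 ht2 c e a b (by omega) (by omega) (by omega) he
      have heq : (X ((a : ℕ) : Fin (d + 1)) * X ((b : ℕ) : Fin (d + 1)) -
          X ((c : ℕ) : Fin (d + 1)) * X ((e : ℕ) : Fin (d + 1)) :
          MvPolynomial (Fin (d+1)) K)
          = -(X ((c : ℕ) : Fin (d + 1)) * X ((e : ℕ) : Fin (d + 1)) -
              X ((a : ℕ) : Fin (d + 1)) * X ((b : ℕ) : Fin (d + 1))) := by ring
      rw [heq]; exact neg_mem this }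
  | { have := key (K := K) d t hd ht1 ht2 e c a b (by omega) (by omega) (by omega) hc
      have heq : (X ((a : ℕ) : Fin (d + 1)) * X ((b : ℕ) : Fin (d + 1)) -
          X ((c : ℕ) : Fin (d + 1)) * X ((e : ℕ) : Fin (d + 1)) :
          MvPolynomial (Fin (d+1)) K)
          = -(X ((e : ℕ) : Fin (d + 1)) * X ((c : ℕ) : Fin (d + 1)) -
              X ((a : ℕ) : Fin (d + 1)) * X ((b : ℕ) : Fin (d + 1))) := by ring
      rw [heq]; exact neg_mem this }
  | { have := key (K := K) d t hd ht1 ht2 c e b a (by omega) (by omega) (by omega) he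
      have heq : (X ((a : ℕ) : Fin (d + 1)) * X ((b : ℕ) : Fin (d + 1)) -
          X ((c : ℕ) : Fin (d + 1)) * X ((e : ℕ) : Fin (d + 1)) :
          MvPolynomial (Fin (d+1)) K)
          = -(X ((c : ℕ) : Fin (d + 1)) * X ((e : ℕ) : Fin (d + 1)) -
              X ((b : ℕ) : Fin (d + 1)) * X ((a : ℕ) : Fin (d + 1))) := by ring
      rw [heq]; exact neg_mem this }
  | { have := key (K := K) d t hd ht1 ht2 e c b a (by omega) (by omega) (by omega) hc
      have heq : (X ((a : ℕ) : Fin (d + 1)) * X ((b : ℕ) : Fin (d + 1)) -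
          X ((c : ℕ) : Fin (d + 1)) * X ((e : ℕ) : Fin (d + 1)) :
          MvPolynomial (Fin (d+1)) K)
          = -(X ((e : ℕ) : Fin (d + 1)) * X ((c : ℕ) : Fin (d + 1)) -
              X ((b : ℕ) : Fin (d + 1)) * X ((a : ℕ) : Fin (d + 1))) := by ring
      rw [heq]; exact neg_mem this }

/-- The binomial ideal generated by all `z_a z_b − z_c z_e` with `a + b = c + e`. -/
noncomputable def binIdeal (K : Type*) [Field K] (d : ℕ) : Ideal (MvPolynomial (Fin (d + 1)) K) :=
  Ideal.span {p | ∃ a b c e : ℕ, a + b = c + e ∧ a ≤ d ∧ b ≤ d ∧ c ≤ d ∧ e ≤ d ∧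
    p = X ((a : ℕ) : Fin (d + 1)) * X ((b : ℕ) : Fin (d + 1)) -
        X ((c : ℕ) : Fin (d + 1)) * X ((e : ℕ) : Fin (d + 1))}

lemma eq_bin (d t : ℕ) (hd : 2 ≤ d) (ht1 : 1 ≤ t) (ht2 : t ≤ d - 1) :
    hankelMinors2 K d t = binIdeal K d := by
  apply le_antisymm
  · rw [hankelMinors2, Ideal.span_le]
    rintro p ⟨i, i', j, j', h1, h2, h3, h4, rfl⟩
    apply Ideal.subset_span
    exact ⟨i + j, i' + j', i + j', i' + j, by omega, by omega, by omega, by omega, by omega, rfl⟩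
  · rw [binIdeal, Ideal.span_le]
    rintro p ⟨a, b, c, e, hs, ha, hb, hc, he, rfl⟩
    exact gen d t hd ht1 ht2 a b c e hs ha hb hc he

end HankelAux

theorem stmt7 {K : Type*} [Field K] (d : ℕ) (hd : 2 ≤ d)
    (t : ℕ) (ht1 : 1 ≤ t) (ht2 : t ≤ d - 1) :
    hankelMinors2 K d 1 = hankelMinors2 K d t := by
  rw [HankelAux.eq_bin d 1 hd le_rfl (by omega), HankelAux.eq_bin d t hd ht1 ht2]
end

section
/- Let a, b ≥ 1 with a + b = d, and fix n ≥ 2. Every 2×2 minor of the generic catalecticant Cat(a, b; n) vanishes at every K-point of the affine cone over the d-th Veronese embedding of P^{n−1}; conversely, any point (z_γ)_{|γ|=d} ∈ K^{binom(n+d−1,d)}, K algebraically closed, at which all 2×2 minors of Cat(1, d−1; n) vanish and which is nonzero lies on the affine cone over the Veronese variety. -/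
/-- Part 1: every 2×2 minor of `Cat(a, b; n)` vanishes at every point of the affine cone over
the `d`-th Veronese variety, i.e. at points `z_γ = c·f^γ`.
Part 2 (converse, `K` algebraically closed): a nonzero point `(z_γ)_{|γ|=d}` at which all
2×2 minors of `Cat(1, d−1; n)` vanish lies on the affine cone over the Veronese variety,
i.e. `z_γ = f^γ` for some `f ∈ K^n`. -/
theorem stmt9 {K : Type*} [Field K] [IsAlgClosed K] (n d a b : ℕ)
    (hn : 2 ≤ n) (ha : 1 ≤ a) (hb : 1 ≤ b) (hab : a + b = d) :
    (∀ (c : K) (f : Fin n → K) (α α' β β' : Fin n → ℕ),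
        (∑ j, α j = a) → (∑ j, α' j = a) → (∑ j, β j = b) → (∑ j, β' j = b) →
        (c * ∏ j, f j ^ (α j + β j)) * (c * ∏ j, f j ^ (α' j + β' j)) -
          (c * ∏ j, f j ^ (α j + β' j)) * (c * ∏ j, f j ^ (α' j + β j)) = 0) ∧
    (∀ z : (Fin n → ℕ) → K,
        (∃ γ : Fin n → ℕ, (∑ j, γ j = d) ∧ z γ ≠ 0) →
        (∀ (i i' : Fin n) (β β' : Fin n → ℕ),
            (∑ j, β j = d - 1) → (∑ j, β' j = d - 1) →
            z (fun j => β j + if j = i then 1 else 0) *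
              z (fun j => β' j + if j = i' then 1 else 0) -
            z (fun j => β' j + if j = i then 1 else 0) *
              z (fun j => β j + if j = i' then 1 else 0) = 0) →
        ∃ f : Fin n → K, ∀ γ : Fin n → ℕ, (∑ j, γ j = d) → z γ = ∏ j, f j ^ γ j) := by
  have hd2 : 2 ≤ d := by omega
  constructor
  · intro c f α α' β β' hα hα' hβ hβ'
    simp only [pow_add, Finset.prod_mul_distrib]
    ring
  · rintro z ⟨γ₀, hγ₀d, hγ₀⟩ hminor
    -- rearranged minors
    have E : ∀ (β β' : Fin n → ℕ) (i i' : Fin n),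
        (∑ j, β j = d - 1) → (∑ j, β' j = d - 1) →
        z (fun j => β j + if j = i then 1 else 0) *
          z (fun j => β' j + if j = i' then 1 else 0) =
        z (fun j => β' j + if j = i then 1 else 0) *
          z (fun j => β j + if j = i' then 1 else 0) := by
      intro β β' i i' h h'
      linear_combination hminor i i' β β' h h'
    -- sum helpers
    have sum_add_e : ∀ (β : Fin n → ℕ) (i : Fin n),
        ∑ j, (β j + if j = i then 1 else 0) = (∑ j, β j) + 1 := by
      intro β i
      rw [Finset.sum_add_distrib]
      simp [Finset.sum_ite_eq']
    have prod_e : ∀ (v : Fin n → K) (i : Fin n),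
        ∏ j, v j ^ (if j = i then 1 else 0) = v i := by
      intro v i
      have h1 : ∀ j, v j ^ (if j = i then 1 else 0) = if j = i then v j else 1 := by
        intro j; split <;> simp
      simp_rw [h1]
      rw [Finset.prod_ite_eq']
      simp
    have decomp : ∀ (γ : Fin n → ℕ) (i : Fin n), (∑ j, γ j = d) → 1 ≤ γ i →
        (∑ j, (γ j - if j = i then 1 else 0) = d - 1) ∧
        ((fun j => (γ j - if j = i then 1 else 0) + if j = i then 1 else 0) = γ) := by
      intro γ i hs hi
      have heq : (fun j => (γ j - if j = i then 1 else 0) + if j = i then 1 else 0) = γ := by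
        funext j
        by_cases hj : j = i
        · subst hj; simp; omega
        · simp [hj]
      refine ⟨?_, heq⟩
      have h2 := sum_add_e (fun j => γ j - if j = i then 1 else 0) i
      have h3 : ∑ j, ((γ j - if j = i then 1 else 0) + if j = i then 1 else 0) = ∑ j, γ j :=
        Finset.sum_congr rfl (fun j _ => congrFun heq j)
      omega
    -- pick k with γ₀ k ≥ 1
    obtain ⟨k, hk⟩ : ∃ k, 1 ≤ γ₀ k := by
      by_contra h
      push_neg at h
      have : ∑ j, γ₀ j = 0 := Finset.sum_eq_zero fun j _ => by have := h j; omega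
      omega
    -- choosing a nonzero direction i ≠ k in γ
    have pick : ∀ γ : Fin n → ℕ, (∑ j, γ j = d) → γ k < d → ∃ i, i ≠ k ∧ 1 ≤ γ i := by
      intro γ hs hlt
      by_contra h
      push_neg at h
      have : ∑ j, γ j = γ k := by
        rw [← Finset.sum_erase_add _ _ (Finset.mem_univ k)]
        have : ∑ j ∈ Finset.univ.erase k, γ j = 0 := by
          apply Finset.sum_eq_zero
          intro j hj
          have hjk := Finset.ne_of_mem_erase hj
          have := h j hjk
          omega
        omega
      omega
    set β₀ : Fin n → ℕ := fun j => if j = k then d - 1 else 0 with hβ₀def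
    have hβ₀s : ∑ j, β₀ j = d - 1 := by
      rw [hβ₀def]; simp [Finset.sum_ite_eq']
    set w : Fin n → K := fun i => z (fun j => β₀ j + if j = i then 1 else 0) with hwdef
    -- extensional identification for γ concentrated at k
    have conc : ∀ γ : Fin n → ℕ, (∑ j, γ j = d) → γ k = d →
        γ = (fun j => β₀ j + if j = k then 1 else 0) := by
      intro γ hs hγk
      have h0 : ∀ j, j ≠ k → γ j = 0 := by
        intro j hj
        by_contra h0
        have h1 : 1 ≤ γ j := by omega
        have h2 : γ j + γ k ≤ ∑ j, γ j := by
          have := Finset.add_sum_erase Finset.univ γ (Finset.mem_univ j)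
          calc γ j + γ k ≤ γ j + ∑ x ∈ Finset.univ.erase j, γ x := by
                have : γ k ≤ ∑ x ∈ Finset.univ.erase j, γ x :=
                  Finset.single_le_sum (fun x _ => Nat.zero_le _)
                    (Finset.mem_erase.mpr ⟨(Ne.symm hj), Finset.mem_univ k⟩)
                omega
            _ = ∑ x, γ x := this
        omega
      funext j
      by_cases hj : j = k
      · rw [hj, if_pos rfl]
        have h1 : β₀ k = d - 1 := by simp [hβ₀def]
        omega
      · have h1 : β₀ j = 0 := by simp [hβ₀def, hj]
        rw [h1, if_neg hj, h0 j hj]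
    -- nonvanishing of w k
    have N : ∀ m (γ : Fin n → ℕ), (∑ j, γ j = d) → 1 ≤ γ k → d - γ k ≤ m →
        z γ ≠ 0 → w k ≠ 0 := by
      intro m
      induction m with
      | zero =>
        intro γ hs hk1 hm hz
        have hγk : γ k ≤ d := by
          have : γ k ≤ ∑ j, γ j := Finset.single_le_sum (fun x _ => Nat.zero_le _) (Finset.mem_univ k)
          omega
        have hγk' : γ k = d := by omega
        show z (fun j => β₀ j + if j = k then 1 else 0) ≠ 0
        rw [← conc γ hs hγk']
        exact hz
      | succ m ih =>
        intro γ hs hk1 hm hz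
        by_cases hcase : d - γ k ≤ m
        · exact ih γ hs hk1 hcase hz
        · have hlt : γ k < d := by omega
          obtain ⟨i, hik, hi1⟩ := pick γ hs hlt
          obtain ⟨hβs, hβe⟩ := decomp γ i hs hi1
          obtain ⟨hβ's, hβ'e⟩ := decomp γ k hs hk1
          have hE := E (fun j => γ j - if j = i then 1 else 0)
            (fun j => γ j - if j = k then 1 else 0) i k hβs hβ's
          rw [hβe, hβ'e] at hE
          have hz' : z (fun j => (γ j - if j = i then 1 else 0) + if j = k then 1 else 0) ≠ 0 := by
            intro h0
            rw [h0, mul_zero] at hE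
            exact hz (by simpa [mul_self_eq_zero] using hE)
          have hval : (γ k - if k = i then 1 else 0) + (if k = k then 1 else 0) = γ k + 1 := by
            rw [if_neg (Ne.symm hik), if_pos rfl]
            omega
          refine ih (fun j => (γ j - if j = i then 1 else 0) + if j = k then 1 else 0) ?_ ?_ ?_ hz'
          · rw [sum_add_e, hβs]; omega
          · show 1 ≤ (γ k - if k = i then 1 else 0) + (if k = k then 1 else 0)
            omega
          · show d - ((γ k - if k = i then 1 else 0) + (if k = k then 1 else 0)) ≤ m
            omega
    have hc : w k ≠ 0 := N d γ₀ hγ₀d hk (by omega) hγ₀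
    -- main lemma
    have L : ∀ m (γ : Fin n → ℕ), (∑ j, γ j = d) → d - γ k ≤ m →
        z γ * w k ^ (d - 1) = ∏ j, w j ^ γ j := by
      intro m
      induction m with
      | zero =>
        intro γ hs hm
        have hγk : γ k ≤ d := by
          have : γ k ≤ ∑ j, γ j := Finset.single_le_sum (fun x _ => Nat.zero_le _) (Finset.mem_univ k)
          omega
        have hγk' : γ k = d := by omega
        have hγeq := conc γ hs hγk'
        have h0 : ∀ j, j ≠ k → γ j = 0 := by
          intro j hj
          have := congrFun hγeq j
          rw [hβ₀def] at this
          simpa [hj] using this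
        rw [Finset.prod_eq_single k (fun b _ hb => by rw [h0 b hb, pow_zero]) (by simp)]
        rw [hγk']
        have hzw : z γ = w k := by
          show z γ = z (fun j => β₀ j + if j = k then 1 else 0)
          rw [hγeq]
        rw [hzw]
        rw [← pow_succ']
        congr 1
        omega
      | succ m ih =>
        intro γ hs hm
        by_cases hcase : d - γ k ≤ m
        · exact ih γ hs hcase
        · have hlt : γ k < d := by omega
          obtain ⟨i, hik, hi1⟩ := pick γ hs hlt
          obtain ⟨hβs, hβe⟩ := decomp γ i hs hi1
          have hE := E (fun j => γ j - if j = i then 1 else 0) β₀ i k hβs hβ₀s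
          rw [hβe] at hE
          -- hE : z γ * w k = w i * z γ'
          set γ' : Fin n → ℕ :=
            fun j => (γ j - if j = i then 1 else 0) + if j = k then 1 else 0 with hγ'def
          have hγ's : ∑ j, γ' j = d := by
            rw [hγ'def, sum_add_e, hβs]; omega
          have hγ'k : γ' k = γ k + 1 := by
            rw [hγ'def]; simp [Ne.symm hik]
          have hIH := ih γ' hγ's (by omega)
          have hE2 : z γ * w k = w i * z γ' := hE
          apply mul_right_cancel₀ hc
          have key : ∏ j, w j ^ γ j = (∏ j, w j ^ (γ j - if j = i then 1 else 0)) * w i := by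
            conv_lhs => rw [← hβe]
            simp only [pow_add, Finset.prod_mul_distrib, prod_e]
          have key' : ∏ j, w j ^ γ' j =
              (∏ j, w j ^ (γ j - if j = i then 1 else 0)) * w k := by
            rw [hγ'def]
            simp only [pow_add, Finset.prod_mul_distrib, prod_e]
          calc z γ * w k ^ (d - 1) * w k
              = (z γ * w k) * w k ^ (d - 1) := by ring
            _ = (w i * z γ') * w k ^ (d - 1) := by rw [hE2]
            _ = w i * (z γ' * w k ^ (d - 1)) := by ring
            _ = w i * ∏ j, w j ^ γ' j := by rw [hIH]
            _ = (∏ j, w j ^ γ j) * w k := by rw [key, key']; ring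
    -- conclude
    obtain ⟨s, hs⟩ := IsAlgClosed.exists_pow_nat_eq (w k ^ (d - 1)) (n := d) (by omega)
    have hs0 : s ≠ 0 := by
      intro h0
      rw [h0] at hs
      have : w k ^ (d - 1) = 0 := by rw [← hs, zero_pow (by omega)]
      exact hc (pow_eq_zero_iff (by omega) |>.mp this)
    refine ⟨fun i => w i * s⁻¹, ?_⟩
    intro γ hγ
    have hL := L d γ hγ (by omega)
    have : ∏ j, (w j * s⁻¹) ^ γ j = (∏ j, w j ^ γ j) * (s⁻¹) ^ d := by
      simp only [mul_pow, Finset.prod_mul_distrib]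
      rw [Finset.prod_pow_eq_pow_sum, hγ]
    rw [this, ← hL, ← hs, mul_assoc, ← mul_pow, mul_inv_cancel₀ hs0, one_pow, mul_one]
end

section
/- Every 2×2 minor of the generic Hankel matrix lies in the ideal generated by adjacent 2×2 minors: in K[z_0, …, z_d], for all 0 ≤ i < i' and 0 ≤ j < j' with i' + j' ≤ d, the polynomial z_{i+j}·z_{i'+j'} − z_{i+j'}·z_{i'+j} lies in the ideal generated by the polynomials z_s·z_{t+1} − z_{s+1}·z_t for 0 ≤ s < t ≤ d − 1. -/
open MvPolynomial
open Fin.NatCast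

theorem stmt18_aux {K : Type*} [CommRing K] (d : ℕ) :
    ∀ k s t : ℕ, 0 < k → s ≤ t → t + k ≤ d →
      (X ((s : ℕ) : Fin (d + 1)) * X ((t + k : ℕ) : Fin (d + 1)) -
        X ((s + k : ℕ) : Fin (d + 1)) * X ((t : ℕ) : Fin (d + 1)) :
        MvPolynomial (Fin (d + 1)) K) ∈
      Ideal.span {p : MvPolynomial (Fin (d + 1)) K |
        ∃ s t : ℕ, s < t ∧ t ≤ d - 1 ∧
          p = X ((s : ℕ) : Fin (d + 1)) * X ((t + 1 : ℕ) : Fin (d + 1)) -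
              X ((s + 1 : ℕ) : Fin (d + 1)) * X ((t : ℕ) : Fin (d + 1))} := by
  intro k
  induction k with
  | zero => intro s t h; omega
  | succ n ih =>
    intro s t _ hst htk
    rcases eq_or_lt_of_le hst with rfl | hlt
    · have : (X ((s : ℕ) : Fin (d + 1)) * X ((s + (n+1) : ℕ) : Fin (d + 1)) -
          X ((s + (n+1) : ℕ) : Fin (d + 1)) * X ((s : ℕ) : Fin (d + 1)) :
          MvPolynomial (Fin (d + 1)) K) = 0 := by ring
      rw [this]
      exact Ideal.zero_mem _
    · rcases Nat.eq_zero_or_pos n with rfl | hn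
      · exact Ideal.subset_span ⟨s, t, hlt, by omega, rfl⟩
      · have h1 : (X ((s : ℕ) : Fin (d + 1)) * X ((t + n + 1 : ℕ) : Fin (d + 1)) -
            X ((s + 1 : ℕ) : Fin (d + 1)) * X ((t + n : ℕ) : Fin (d + 1)) :
            MvPolynomial (Fin (d + 1)) K) ∈
            Ideal.span {p : MvPolynomial (Fin (d + 1)) K |
              ∃ s t : ℕ, s < t ∧ t ≤ d - 1 ∧
                p = X ((s : ℕ) : Fin (d + 1)) * X ((t + 1 : ℕ) : Fin (d + 1)) -
                    X ((s + 1 : ℕ) : Fin (d + 1)) * X ((t : ℕ) : Fin (d + 1))} :=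
          Ideal.subset_span ⟨s, t + n, by omega, by omega, rfl⟩
        have h2 := ih (s + 1) t (by omega) (by omega) (by omega)
        have hsum := Ideal.add_mem _ h1 h2
        have e1 : t + (n + 1) = t + n + 1 := by omega
        have e2 : s + (n + 1) = s + 1 + n := by omega
        rw [e1, e2]
        convert hsum using 1
        ring

/-- Every 2×2 minor of the generic Hankel matrix lies in the ideal generated by the
"adjacent" 2×2 minors: in `K[z_0,…,z_d]`, for `0 ≤ i < i'`, `0 ≤ j < j'` with `i' + j' ≤ d`,
the minor `z_{i+j}·z_{i'+j'} − z_{i+j'}·z_{i'+j}` lies in the ideal generated by the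
polynomials `z_s·z_{t+1} − z_{s+1}·z_t` for `0 ≤ s < t ≤ d − 1`. -/
theorem stmt18 {K : Type*} [CommRing K] (d : ℕ) (i i' j j' : ℕ)
    (hi : i < i') (hj : j < j') (hij : i' + j' ≤ d) :
    (X ((i + j : ℕ) : Fin (d + 1)) * X ((i' + j' : ℕ) : Fin (d + 1)) -
        X ((i + j' : ℕ) : Fin (d + 1)) * X ((i' + j : ℕ) : Fin (d + 1)) :
      MvPolynomial (Fin (d + 1)) K) ∈
    Ideal.span {p : MvPolynomial (Fin (d + 1)) K |
      ∃ s t : ℕ, s < t ∧ t ≤ d - 1 ∧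
        p = X ((s : ℕ) : Fin (d + 1)) * X ((t + 1 : ℕ) : Fin (d + 1)) -
            X ((s + 1 : ℕ) : Fin (d + 1)) * X ((t : ℕ) : Fin (d + 1))} := by
  have e1 : i' + j' = (i + j') + (i' - i) := by omega
  have e2 : i' + j = (i + j) + (i' - i) := by omega
  rw [e1, e2]
  have h := stmt18_aux (K := K) d (i' - i) (i + j) (i + j') (by omega) (by omega) (by omega)
  convert h using 1
  ring
end
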